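/- For every ℓ : 𝒜 → ℝ and every k ∈ 𝒜, the partial derivative of the unordered-pair preference loss L_p with respect to the coordinate ℓ(k) exists and equals −(α/|𝒜|²) · Σ_{b ≠ k} [ P*_{kb} − σ(α(ℓ(k) − ℓ(b))) ]. -/

import Mathlib

open Finset

/-- The logistic (sigmoid) function σ(z) = 1/(1+e^{-z}). -/
noncomputable def sigmoid (z : ℝ) : ℝ := 1 / (1 + Real.exp (-z))

/-- Bradley–Terry target probability P*_{ab} = σ(β(Q a − Q b)). -/
noncomputable def Pstar {A : Type*} (β : ℝ) (Q : A → ℝ) (a b : A) : ℝ :=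
  sigmoid (β * (Q a - Q b))

/-- Model probability P_{ab}(ℓ) = σ(α(ℓ a − ℓ b)). -/
noncomputable def Pmod {A : Type*} (α : ℝ) (ℓ : A → ℝ) (a b : A) : ℝ :=
  sigmoid (α * (ℓ a - ℓ b))

/-- Unordered-pair (distinct-pair) preference loss L_p(ℓ). -/
noncomputable def lossP {A : Type*} [Fintype A] [DecidableEq A] (α β : ℝ) (Q : A → ℝ)
    (ℓ : A → ℝ) : ℝ :=
  -(1 / ((Fintype.card A : ℝ) ^ 2)) *
    ∑ a : A, ∑ b ∈ Finset.univ.filter (fun b => b ≠ a),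
      Pstar β Q a b * Real.log (Pmod α ℓ a b)

lemma one_add_exp_pos (z : ℝ) : 0 < 1 + Real.exp (-z) := by positivity

lemma sigmoid_pos (z : ℝ) : 0 < sigmoid z := by
  unfold sigmoid; positivity

lemma sigmoid_neg_eq (z : ℝ) : sigmoid (-z) = 1 - sigmoid z := by
  unfold sigmoid
  rw [neg_neg]
  have h1 := (one_add_exp_pos z).ne'
  have h2 := (one_add_exp_pos (-z)).ne'
  rw [neg_neg] at h2
  field_simp
  rw [add_sub_cancel_left, add_mul, one_mul, ← Real.exp_add, add_neg_cancel, Real.exp_zero]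
  ring

lemma hasDerivAt_log_sigmoid (z : ℝ) :
    HasDerivAt (fun z => Real.log (sigmoid z)) (1 - sigmoid z) z := by
  have h1 : HasDerivAt (fun z : ℝ => 1 + Real.exp (-z)) (Real.exp (-z) * (-1)) z :=
    ((hasDerivAt_id z).neg.exp).const_add 1
  have h2 := (h1.log (one_add_exp_pos z).ne').neg
  have heq : (fun z : ℝ => Real.log (sigmoid z)) = fun z => -Real.log (1 + Real.exp (-z)) := by
    funext w
    unfold sigmoid
    rw [Real.log_div one_ne_zero (one_add_exp_pos w).ne', Real.log_one]
    ring
  rw [heq]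
  refine h2.congr_deriv ?_
  unfold sigmoid
  field_simp
  ring

/-- the partial derivative of L_p with respect to the coordinate ℓ(k) exists
and equals −(α/|𝒜|²) · Σ_{b ≠ k} [ P*_{kb} − σ(α(ℓ(k) − ℓ(b))) ]. -/
theorem stmt_4 {A : Type*} [Fintype A] [DecidableEq A] (hA : 2 ≤ Fintype.card A)
    (Q : A → ℝ) (α β : ℝ) (hα : 0 < α) (hβ : 0 < β) (ℓ : A → ℝ) (k : A) :
    HasDerivAt (fun t : ℝ => lossP α β Q (Function.update ℓ k t))
      (-(α / ((Fintype.card A : ℝ) ^ 2)) *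
        ∑ b ∈ Finset.univ.filter (fun b => b ≠ k),
          (Pstar β Q k b - sigmoid (α * (ℓ k - ℓ b))))
      (ℓ k) := by
  classical
  set n : ℝ := (Fintype.card A : ℝ) with hn
  -- the per-pair derivative
  set D : A → A → ℝ := fun a b => Pstar β Q a b *
    ((1 - sigmoid (α * (ℓ a - ℓ b))) *
      (α * ((if a = k then (1:ℝ) else 0) - (if b = k then (1:ℝ) else 0)))) with hD
  have key : ∀ a b : A,
      HasDerivAt (fun t : ℝ => Pstar β Q a b * Real.log (Pmod α (Function.update ℓ k t) a b))
        (D a b) (ℓ k) := by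
    intro a b
    have hu : ∀ c : A, HasDerivAt (fun t : ℝ => Function.update ℓ k t c)
        (if c = k then (1:ℝ) else 0) (ℓ k) := by
      intro c
      by_cases h : c = k
      · simpa [h, Function.update_apply] using hasDerivAt_id' (ℓ k)
      · simpa [h, Function.update_apply] using hasDerivAt_const (ℓ k) (ℓ c)
    have hz : HasDerivAt (fun t : ℝ => α * (Function.update ℓ k t a - Function.update ℓ k t b))
        (α * ((if a = k then (1:ℝ) else 0) - (if b = k then (1:ℝ) else 0))) (ℓ k) :=
      ((hu a).sub (hu b)).const_mul α
    have hval : α * (Function.update ℓ k (ℓ k) a - Function.update ℓ k (ℓ k) b)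
        = α * (ℓ a - ℓ b) := by
      simp [Function.update_eq_self]
    have hlog := (hasDerivAt_log_sigmoid (α * (ℓ a - ℓ b)))
    have hcomp : HasDerivAt
        (fun t : ℝ => Real.log (sigmoid (α * (Function.update ℓ k t a - Function.update ℓ k t b))))
        ((1 - sigmoid (α * (ℓ a - ℓ b))) *
          (α * ((if a = k then (1:ℝ) else 0) - (if b = k then (1:ℝ) else 0)))) (ℓ k) := by
      have := HasDerivAt.comp (ℓ k) (hval ▸ hlog) hz
      rw [hval] at this
      exact this
    simpa [hD, Pmod] using hcomp.const_mul (Pstar β Q a b)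
  -- derivative of whole loss
  have hderiv : HasDerivAt (fun t : ℝ => lossP α β Q (Function.update ℓ k t))
      (-(1 / n ^ 2) * ∑ a : A, ∑ b ∈ Finset.univ.filter (fun b => b ≠ a), D a b) (ℓ k) := by
    have hsum : HasDerivAt
        (fun t : ℝ => ∑ a : A, ∑ b ∈ Finset.univ.filter (fun b => b ≠ a),
          Pstar β Q a b * Real.log (Pmod α (Function.update ℓ k t) a b))
        (∑ a : A, ∑ b ∈ Finset.univ.filter (fun b => b ≠ a), D a b) (ℓ k) := by
      apply HasDerivAt.fun_sum
      intro a _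
      apply HasDerivAt.fun_sum
      intro b _
      exact key a b
    simpa only [lossP, hn] using hsum.const_mul (-(1 / n ^ 2))
  -- identify the derivative value
  convert hderiv using 1
  have hfe : ∀ a : A, Finset.univ.filter (fun b => b ≠ a) = Finset.univ.erase a := by
    intro a; ext b; simp [and_comm]
  rw [hfe k]
  have hsplit : ∑ a : A, ∑ b ∈ Finset.univ.filter (fun b => b ≠ a), D a b
      = (∑ b ∈ Finset.univ.erase k, D k b) + ∑ a ∈ Finset.univ.erase k, D a k := by
    rw [← Finset.add_sum_erase Finset.univ _ (Finset.mem_univ k), hfe k]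
    congr 1
    apply Finset.sum_congr rfl
    intro a ha
    have hak : a ≠ k := (Finset.mem_erase.mp ha).1
    rw [hfe a]
    apply Finset.sum_eq_single_of_mem k (Finset.mem_erase.mpr ⟨fun h => hak h.symm, Finset.mem_univ k⟩)
    intro b _ hbk
    simp [hD, hbk, hak]
  rw [hsplit, ← Finset.sum_add_distrib]
  rw [Finset.mul_sum, Finset.mul_sum]
  apply Finset.sum_congr rfl
  intro b hb
  have hbk : b ≠ k := (Finset.mem_erase.mp hb).1
  have hPb : Pstar β Q b k = 1 - Pstar β Q k b := by
    unfold Pstar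
    rw [show β * (Q b - Q k) = -(β * (Q k - Q b)) by ring, sigmoid_neg_eq]
  have hσ : sigmoid (α * (ℓ b - ℓ k)) = 1 - sigmoid (α * (ℓ k - ℓ b)) := by
    rw [show α * (ℓ b - ℓ k) = -(α * (ℓ k - ℓ b)) by ring, sigmoid_neg_eq]
  simp [hD, hPb, hσ, hbk]
  ring
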